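/- The discrete NLS symmetry F = (u_{-1,0}/(1 + u_{-1,0}v_{1,0}), -v_{1,0}/(1 + u_{-1,0}v_{1,0})) satisfies the determining equations: on solutions of the discrete NLS system at the quads with bottom-left corners (-1,0), (0,0), (1,0), one has Q_{(0,0)}·F_{0,0} + F_{1,0} - F_{0,1} + Q_{(1,1)}·F_{1,1} = 0, where F_{i,j} = (u_{i-1,j}/(1 + u_{i-1,j}v_{i+1,j}), -v_{i+1,j}/(1 + u_{i-1,j}v_{i+1,j})), Q_{(0,0)} = f_{0,0}·[[1, 0],[v_{1,1}², 0]], Q_{(1,1)} = f_{0,0}·[[0, -u_{0,0}²],[0, -1]], and f_{0,0} = (β-α)/(1 + u_{0,0}v_{1,1})². -/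

import Mathlib

/-- The discrete NLS symmetry
`F = (u₋₁₀/(1+u₋₁₀v₁₀), -v₁₀/(1+u₋₁₀v₁₀))` satisfies the determining
equations `Q_{(0,0)}F_{0,0} + F_{1,0} - F_{0,1} + Q_{(1,1)}F_{1,1} = 0` on
solutions of the discrete NLS system. -/
theorem nls_symmetry_determining_equations
    (um10 u00 u10 u20 um11 u01 u11 : ℝ)
    (v00 v10 v20 vm11 v01 v11 v21 : ℝ) (α β : ℝ)
    -- system at the quad with bottom-left corner (-1,0)
    (hA1 : u00 - um11 = ((α - β) / (1 + um10 * v01)) * um10)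
    (hA2 : v00 - vm11 = -(((α - β) / (1 + um10 * v01)) * v01))
    -- system at the quad with bottom-left corner (0,0)
    (hB1 : u10 - u01 = ((α - β) / (1 + u00 * v11)) * u00)
    (hB2 : v10 - v01 = -(((α - β) / (1 + u00 * v11)) * v11))
    -- system at the quad with bottom-left corner (1,0)
    (hC1 : u20 - u11 = ((α - β) / (1 + u10 * v21)) * u10)
    (hC2 : v20 - v11 = -(((α - β) / (1 + u10 * v21)) * v21))
    -- nondegeneracy
    (h1 : 1 + um10 * v01 ≠ 0) (h2 : 1 + u00 * v11 ≠ 0) (h3 : 1 + u10 * v21 ≠ 0)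
    (h4 : 1 + um10 * v10 ≠ 0) (h5 : 1 + u00 * v20 ≠ 0)
    (h6 : 1 + um11 * v11 ≠ 0) (h7 : 1 + u01 * v21 ≠ 0) :
    -- first component of the determining equations
    ((β - α) / (1 + u00 * v11) ^ 2) * (um10 / (1 + um10 * v10)) +
      u00 / (1 + u00 * v20) - um11 / (1 + um11 * v11) -
      ((β - α) / (1 + u00 * v11) ^ 2) * u00 ^ 2 * (-(v21 / (1 + u01 * v21))) = 0 ∧
    -- second component of the determining equations
    ((β - α) / (1 + u00 * v11) ^ 2) * v11 ^ 2 * (um10 / (1 + um10 * v10)) +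
      (-(v20 / (1 + u00 * v20))) - (-(v11 / (1 + um11 * v11))) -
      ((β - α) / (1 + u00 * v11) ^ 2) * (-(v21 / (1 + u01 * v21))) = 0 := by
  have e1 : um11 = u00 - ((α - β) / (1 + um10 * v01)) * um10 := by linarith
  have e2 : v10 = v01 - ((α - β) / (1 + u00 * v11)) * v11 := by linarith
  have e3 : u10 = u01 + ((α - β) / (1 + u00 * v11)) * u00 := by linarith
  have e4 : v20 = v11 - ((α - β) / (1 + u10 * v21)) * v21 := by linarith
  subst e4; subst e1; subst e2; subst e3
  clear hA1 hA2 hB1 hB2 hC1 hC2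
  set c := (α - β) / (1 + u00 * v11) with hc
  set e := (α - β) / (1 + um10 * v01) with he
  set d := (α - β) / (1 + (u01 + c * u00) * v21) with hd
  have he' : e = c * (1 + u00 * v11) / (1 + um10 * v01) := by
    rw [he, hc]; field_simp
  have hd' : d = c * (1 + u00 * v11) / (1 + (u01 + c * u00) * v21) := by
    rw [hd, hc]; field_simp
  have hβ : β - α = -(c * (1 + u00 * v11)) := by
    rw [hc]; field_simp; ring
  clear_value c d e
  rw [hβ]
  clear he hd hc
  have h6' : 1 + v11 * (u00 - um10 * e) ≠ 0 := by
    intro h; apply h6; linear_combination h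
  have h7' : 1 + v21 * u01 ≠ 0 := by
    intro h; apply h7; linear_combination h
  set_option maxHeartbeats 2000000 in
  constructor <;> (field_simp; subst he' hd'; field_simp; ring)
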